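/- arXiv:0705.4114 — 2 statements merged into one kernel-verified Lean document; each statement's English description precedes it below -/
import Mathlib

section
/- Assume the pair (m_1,…,m_n; l) is separating and h ∈ ℂ^n satisfies the constraints. Then there exists a unique monic polynomial p ∈ ℂ[x] of degree l such that deg T_h(p) ≤ n−3. (For any monic p of degree l the constraints automatically force deg T_h(p) ≤ l+n−3; the condition is that in addition the coefficients of x^{n−2},…,x^{l+n−3} of T_h(p) vanish.) -/
noncomputable section

/-- The polynomial form `T_h` of the differential operator
`d²/dx² − ∑_s m_s/(x−z_s)·d/dx + ∑_s h_s/(x−z_s)`. -/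
def Tpoly {n : ℕ} (z m h : Fin n → ℂ) (p : Polynomial ℂ) : Polynomial ℂ :=
  (∏ s, (Polynomial.X - Polynomial.C (z s))) *
      Polynomial.derivative (Polynomial.derivative p)
    - (∑ s, Polynomial.C (m s) *
        ∏ r ∈ Finset.univ.erase s, (Polynomial.X - Polynomial.C (z r))) *
      Polynomial.derivative p
    + (∑ s, Polynomial.C (h s) *
        ∏ r ∈ Finset.univ.erase s, (Polynomial.X - Polynomial.C (z r))) * p

/-- The pair (m; l) is separating. -/
def Separating {n : ℕ} (m : Fin n → ℂ) (l : ℕ) : Prop :=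
  ∀ i : ℕ, 1 ≤ i → i ≤ l → (∑ s, m s) - 2 * l + 1 + i ≠ 0

end

noncomputable section Aux

open Polynomial Finset

private lemma aux_mul_coeff_top {u v : Polynomial ℂ} {du dv : ℕ} (hu : u.natDegree ≤ du)
    (hv : v.natDegree ≤ dv) : (u * v).coeff (du + dv) = u.coeff du * v.coeff dv := by
  rw [Polynomial.coeff_mul, Finset.sum_eq_single (du, dv)]
  · rintro ⟨a, b⟩ hab hne
    rw [Finset.HasAntidiagonal.mem_antidiagonal] at hab
    have : du < a ∨ dv < b := by
      rcases Nat.lt_or_ge du a with h1 | h1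
      · exact Or.inl h1
      rcases Nat.lt_or_ge dv b with h2 | h2
      · exact Or.inr h2
      have ha : a = du := by omega
      have hb : b = dv := by omega
      exact absurd (by simp [ha, hb]) hne
    rcases this with h1 | h1
    · rw [coeff_eq_zero_of_natDegree_lt (lt_of_le_of_lt hu h1), zero_mul]
    · rw [coeff_eq_zero_of_natDegree_lt (lt_of_le_of_lt hv h1), mul_zero]
  · intro hmem
    simp [Finset.HasAntidiagonal.mem_antidiagonal] at hmem

private lemma aux_mul_coeff_zero {u v : Polynomial ℂ} {du dv k : ℕ} (hu : u.natDegree ≤ du)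
    (hv : v.natDegree ≤ dv) (hk : du + dv < k) : (u * v).coeff k = 0 :=
  coeff_eq_zero_of_natDegree_lt
    (lt_of_le_of_lt (le_trans natDegree_mul_le (add_le_add hu hv)) hk)

variable {n : ℕ} (z m h : Fin n → ℂ)

private lemma P_monic (s : Fin n) :
    (∏ r ∈ Finset.univ.erase s, (X - C (z r))).Monic :=
  monic_prod_of_monic _ _ fun _ _ => monic_X_sub_C _

private lemma P_natDegree (s : Fin n) :
    (∏ r ∈ Finset.univ.erase s, (X - C (z r))).natDegree = n - 1 := by
  rw [natDegree_prod_of_monic _ _ fun _ _ => monic_X_sub_C _]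
  simp [Finset.card_erase_of_mem]

private lemma A_monic : (∏ s, (X - C (z s)) : Polynomial ℂ).Monic :=
  monic_prod_of_monic _ _ fun _ _ => monic_X_sub_C _

private lemma A_natDegree : (∏ s, (X - C (z s)) : Polynomial ℂ).natDegree = n := by
  rw [natDegree_prod_of_monic _ _ fun _ _ => monic_X_sub_C _]
  simp

private lemma B_natDegree_le :
    (∑ s, C (m s) * ∏ r ∈ Finset.univ.erase s, (X - C (z r))).natDegree ≤ n - 1 := by
  refine Polynomial.natDegree_sum_le_of_forall_le _ _ fun s _ => ?_
  refine le_trans natDegree_mul_le ?_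
  simp [P_natDegree z s]

private lemma B_coeff_top :
    (∑ s, C (m s) * ∏ r ∈ Finset.univ.erase s, (X - C (z r))).coeff (n - 1) = ∑ s, m s := by
  rw [finset_sum_coeff]
  refine Finset.sum_congr rfl fun s _ => ?_
  rw [coeff_C_mul]
  have : (∏ r ∈ Finset.univ.erase s, (X - C (z r))).coeff (n - 1) = 1 := by
    have := (P_monic z s).coeff_natDegree
    rwa [P_natDegree z s] at this
  rw [this, mul_one]

private lemma C_coeff_high (hc1 : ∑ s, h s = 0) :
    ∀ k, n - 1 ≤ k →
      (∑ s, C (h s) * ∏ r ∈ Finset.univ.erase s, (X - C (z r))).coeff k = 0 := by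
  intro k hk
  rcases Nat.eq_or_lt_of_le hk with hk1 | hk1
  · rw [← hk1]
    rw [finset_sum_coeff]
    have : ∀ s ∈ Finset.univ (α := Fin n),
        (C (h s) * ∏ r ∈ Finset.univ.erase s, (X - C (z r))).coeff (n-1) = h s := by
      intro s _
      rw [coeff_C_mul]
      have : (∏ r ∈ Finset.univ.erase s, (X - C (z r))).coeff (n - 1) = 1 := by
        have := (P_monic z s).coeff_natDegree
        rwa [P_natDegree z s] at this
      rw [this, mul_one]
    rw [Finset.sum_congr rfl this, hc1]
  · rw [finset_sum_coeff]
    refine Finset.sum_eq_zero fun s _ => ?_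
    refine coeff_eq_zero_of_natDegree_lt (lt_of_le_of_lt ?_ hk1)
    refine le_trans natDegree_mul_le ?_
    simp [P_natDegree z s]

private lemma C_natDegree_le (hn2 : 2 ≤ n) (hc1 : ∑ s, h s = 0) :
    (∑ s, C (h s) * ∏ r ∈ Finset.univ.erase s, (X - C (z r))).natDegree ≤ n - 2 := by
  rw [natDegree_le_iff_coeff_eq_zero]
  intro k hk
  exact C_coeff_high z h hc1 k (by omega)

private lemma C_coeff_n2 (hn2 : 2 ≤ n) (hc1 : ∑ s, h s = 0) :
    (∑ s, C (h s) * ∏ r ∈ Finset.univ.erase s, (X - C (z r))).coeff (n - 2) =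
      ∑ s, z s * h s := by
  rw [finset_sum_coeff]
  have key : ∀ s : Fin n,
      (∏ r ∈ Finset.univ.erase s, (X - C (z r))).coeff (n - 2) = z s - ∑ r, z r := by
    intro s
    have hd : (∏ r ∈ Finset.univ.erase s, (X - C (z r))).natDegree = n - 1 := P_natDegree z s
    have hpos : 0 < (∏ r ∈ Finset.univ.erase s, (X - C (z r))).natDegree := by omega
    have hnext := Polynomial.nextCoeff_of_natDegree_pos hpos
    have hval := Polynomial.prod_X_sub_C_nextCoeff (s := Finset.univ.erase s) (f := z)
    rw [hnext, hd] at hval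
    have hn2' : n - 1 - 1 = n - 2 := by omega
    rw [hn2'] at hval
    rw [hval]
    have := Finset.add_sum_erase Finset.univ z (Finset.mem_univ s)
    have : ∑ r ∈ Finset.univ.erase s, z r = (∑ r, z r) - z s := by
      rw [← this]; ring
    rw [this]; ring
  calc (∑ s, (C (h s) * ∏ r ∈ Finset.univ.erase s, (X - C (z r))).coeff (n-2))
      = ∑ s, h s * (z s - ∑ r, z r) := by
        refine Finset.sum_congr rfl fun s _ => ?_
        rw [coeff_C_mul, key s]
    _ = ∑ s, z s * h s - (∑ r, z r) * ∑ s, h s := by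
        rw [Finset.mul_sum, ← Finset.sum_sub_distrib]
        refine Finset.sum_congr rfl fun s _ => by ring
    _ = ∑ s, z s * h s := by rw [hc1, mul_zero, sub_zero]

private lemma T_coeff_zero (hn2 : 2 ≤ n) (hc1 : ∑ s, h s = 0) (q : Polynomial ℂ) (d k : ℕ)
    (hq : q.natDegree ≤ d) (hk : d + (n - 2) < k) : (Tpoly z m h q).coeff k = 0 := by
  rw [Tpoly, coeff_add, coeff_sub]
  have h3 : ((∑ s, C (h s) * ∏ r ∈ Finset.univ.erase s, (X - C (z r))) * q).coeff k = 0 :=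
    aux_mul_coeff_zero (C_natDegree_le z h hn2 hc1) hq (by omega)
  have h2 : ((∑ s, C (m s) * ∏ r ∈ Finset.univ.erase s, (X - C (z r))) *
      derivative q).coeff k = 0 := by
    rcases Nat.eq_zero_or_pos d with hd | hd
    · have : q = C (q.coeff 0) := eq_C_of_natDegree_le_zero (by omega)
      rw [this, derivative_C, mul_zero, coeff_zero]
    · have hq' : (derivative q).natDegree ≤ d - 1 :=
        le_trans (natDegree_derivative_le q) (by omega)
      exact aux_mul_coeff_zero (B_natDegree_le z m) hq' (by omega)
  have h1 : ((∏ s, (X - C (z s))) * derivative (derivative q)).coeff k = 0 := by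
    rcases Nat.lt_or_ge d 2 with hd | hd
    · have hq1 : (derivative q).natDegree ≤ 0 :=
        le_trans (natDegree_derivative_le q) (by omega)
      have : derivative q = C ((derivative q).coeff 0) := eq_C_of_natDegree_le_zero hq1
      rw [this, derivative_C, mul_zero, coeff_zero]
    · have hq' : (derivative (derivative q)).natDegree ≤ d - 2 := by
        refine le_trans (natDegree_derivative_le _) ?_
        have := le_trans (natDegree_derivative_le q) (Nat.sub_le_sub_right hq 1)
        omega
      exact aux_mul_coeff_zero (le_of_eq (A_natDegree z)) hq' (by omega)
  rw [h1, h2, h3]; ring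

private lemma T_Xpow_coeff (hn2 : 2 ≤ n) (hc1 : ∑ s, h s = 0) (j : ℕ) :
    (Tpoly z m h (X ^ j)).coeff (n - 2 + j) =
      (j : ℂ) * ((j : ℂ) - 1) - (∑ s, m s) * (j : ℂ) + ∑ s, z s * h s := by
  have hA : (∏ s, (X - C (z s)) : Polynomial ℂ).coeff n = 1 := by
    have := (A_monic z).coeff_natDegree
    rwa [A_natDegree z] at this
  have hγ := C_coeff_n2 z h hn2 hc1
  have hB := B_coeff_top z m
  rw [Tpoly, coeff_add, coeff_sub]
  rcases Nat.lt_or_ge j 2 with hj | hj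
  · interval_cases j
    · simp only [pow_zero, derivative_one, derivative_zero, mul_zero, coeff_zero]
      rw [mul_one, Nat.add_zero, hγ]
      push_cast; ring
    · simp only [pow_one, derivative_X, derivative_one, mul_zero, coeff_zero]
      have h2 : ((∑ s, C (m s) * ∏ r ∈ Finset.univ.erase s, (X - C (z r))) *
          1).coeff (n - 2 + 1) = ∑ s, m s := by
        rw [mul_one]
        have hx : n - 2 + 1 = n - 1 := by omega
        rw [hx, hB]
      have h3' : ((∑ s, C (h s) * ∏ r ∈ Finset.univ.erase s, (X - C (z r))) *
          X).coeff (n - 2 + 1) = ∑ s, z s * h s := by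
        have := aux_mul_coeff_top
          (u := ∑ s, C (h s) * ∏ r ∈ Finset.univ.erase s, (X - C (z r)))
          (v := X) (C_natDegree_le z h hn2 hc1) (le_of_eq natDegree_X)
        rw [this, hγ, coeff_X_one, mul_one]
      rw [h2, h3']
      push_cast; ring
  · -- j ≥ 2
    have h3 : ((∑ s, C (h s) * ∏ r ∈ Finset.univ.erase s, (X - C (z r))) * X ^ j).coeff
        (n - 2 + j) = ∑ s, z s * h s := by
      have := aux_mul_coeff_top (u := ∑ s, C (h s) * ∏ r ∈ Finset.univ.erase s, (X - C (z r)))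
        (v := X ^ j) (C_natDegree_le z h hn2 hc1) (le_of_eq (natDegree_X_pow j))
      rw [this, hγ, coeff_X_pow, if_pos rfl, mul_one]
    have hd1 : derivative (X ^ j : Polynomial ℂ) = C (j : ℂ) * X ^ (j - 1) :=
      derivative_X_pow j
    have hd2 : derivative (derivative (X ^ j : Polynomial ℂ)) =
        C (j : ℂ) * (C ((j - 1 : ℕ) : ℂ) * X ^ (j - 2)) := by
      rw [hd1, derivative_C_mul, derivative_X_pow]
      congr 2
    have h1 : ((∏ s, (X - C (z s))) * derivative (derivative (X ^ j : Polynomial ℂ))).coeff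
        (n - 2 + j) = (j : ℂ) * ((j - 1 : ℕ) : ℂ) := by
      rw [hd2]
      have hdeg : (C ((j : ℂ)) * (C ((j - 1 : ℕ) : ℂ) * X ^ (j - 2))).natDegree ≤ j - 2 := by
        refine le_trans natDegree_mul_le ?_
        refine le_trans (add_le_add (natDegree_C _).le natDegree_mul_le) ?_
        simp [natDegree_X_pow]
      have hx : n - 2 + j = n + (j - 2) := by omega
      rw [hx]
      rw [aux_mul_coeff_top (le_of_eq (A_natDegree z)) hdeg, hA, one_mul]
      rw [coeff_C_mul, coeff_C_mul, coeff_X_pow, if_pos rfl, mul_one]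
    have h2 : ((∑ s, C (m s) * ∏ r ∈ Finset.univ.erase s, (X - C (z r))) *
        derivative (X ^ j : Polynomial ℂ)).coeff (n - 2 + j) = (∑ s, m s) * (j : ℂ) := by
      rw [hd1]
      have hdeg : (C ((j : ℂ)) * X ^ (j - 1)).natDegree ≤ j - 1 := by
        refine le_trans natDegree_mul_le ?_
        simp [natDegree_X_pow]
      have hx : n - 2 + j = (n - 1) + (j - 1) := by omega
      rw [hx]
      rw [aux_mul_coeff_top (B_natDegree_le z m) hdeg, hB]
      rw [coeff_C_mul, coeff_X_pow, if_pos rfl, mul_one]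
    rw [h1, h2, h3]
    have : ((j - 1 : ℕ) : ℂ) = (j : ℂ) - 1 := by
      push_cast [Nat.cast_sub (by omega : 1 ≤ j)]; ring
    rw [this]

private lemma Tpoly_add (p q : Polynomial ℂ) :
    Tpoly z m h (p + q) = Tpoly z m h p + Tpoly z m h q := by
  simp only [Tpoly, map_add]; ring

private lemma Tpoly_sub (p q : Polynomial ℂ) :
    Tpoly z m h (p - q) = Tpoly z m h p - Tpoly z m h q := by
  simp only [Tpoly, map_sub]; ring

private lemma Tpoly_Cmul (c : ℂ) (p : Polynomial ℂ) :
    Tpoly z m h (C c * p) = C c * Tpoly z m h p := by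
  simp only [Tpoly, derivative_C_mul]; ring

private def Tlin (z m h : Fin n → ℂ) : Polynomial ℂ →ₗ[ℂ] Polynomial ℂ where
  toFun := Tpoly z m h
  map_add' p q := Tpoly_add z m h p q
  map_smul' c p := by
    simp only [RingHom.id_apply, Polynomial.smul_eq_C_mul]
    exact Tpoly_Cmul z m h c p

private def lowPoly (l : ℕ) (a : Fin l → ℂ) : Polynomial ℂ :=
  ∑ j : Fin l, C (a j) * X ^ (j : ℕ)

private lemma lowPoly_coeff (l : ℕ) (a : Fin l → ℂ) (k : ℕ) :
    (lowPoly l a).coeff k = if hk : k < l then a ⟨k, hk⟩ else 0 := by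
  rw [lowPoly, finset_sum_coeff]
  simp only [coeff_C_mul, coeff_X_pow]
  split
  · next hk =>
    rw [Finset.sum_eq_single ⟨k, hk⟩]
    · simp
    · intro j _ hne
      rw [if_neg, mul_zero]
      intro hkj
      exact hne (Fin.ext hkj.symm)
    · intro habs; exact absurd (Finset.mem_univ _) habs
  · next hk =>
    refine Finset.sum_eq_zero fun j _ => ?_
    rw [if_neg, mul_zero]
    omega

private lemma lowPoly_natDegree_le (l : ℕ) (a : Fin l → ℂ) :
    (lowPoly l a).natDegree ≤ l - 1 := by
  rw [natDegree_le_iff_coeff_eq_zero]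
  intro k hk
  rw [lowPoly_coeff]
  rw [dif_neg]
  omega

private lemma T_lowPoly_coeff (l : ℕ) (a : Fin l → ℂ) (k : ℕ) :
    (Tpoly z m h (lowPoly l a)).coeff k =
      ∑ j : Fin l, a j * (Tpoly z m h (X ^ (j : ℕ))).coeff k := by
  have : Tpoly z m h (lowPoly l a) = ∑ j : Fin l, C (a j) * Tpoly z m h (X ^ (j : ℕ)) := by
    have hmap := map_sum (Tlin z m h) (fun j : Fin l => C (a j) * X ^ (j : ℕ)) Finset.univ
    have : Tlin z m h (lowPoly l a) = ∑ j : Fin l, Tlin z m h (C (a j) * X ^ (j : ℕ)) := hmap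
    rw [show (Tlin z m h (lowPoly l a) : Polynomial ℂ) = Tpoly z m h (lowPoly l a) from rfl]
      at this
    rw [this]
    refine Finset.sum_congr rfl fun j _ => ?_
    exact Tpoly_Cmul z m h (a j) (X ^ (j : ℕ))
  rw [this, finset_sum_coeff]
  refine Finset.sum_congr rfl fun j _ => ?_
  rw [coeff_C_mul]

private def Psi (z m h : Fin n → ℂ) (l : ℕ) : (Fin l → ℂ) →ₗ[ℂ] (Fin l → ℂ) where
  toFun a := fun i => ∑ j : Fin l, a j * (Tpoly z m h (X ^ (j : ℕ))).coeff (n - 2 + (i : ℕ))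
  map_add' a b := by
    funext i
    simp only [Pi.add_apply, add_mul, Finset.sum_add_distrib]
  map_smul' c a := by
    funext i
    simp only [Pi.smul_apply, smul_eq_mul, RingHom.id_apply, Finset.mul_sum, mul_assoc]

private lemma Psi_apply (l : ℕ) (a : Fin l → ℂ) (i : Fin l) :
    Psi z m h l a i = (Tpoly z m h (lowPoly l a)).coeff (n - 2 + (i : ℕ)) := by
  rw [T_lowPoly_coeff]
  rfl

private lemma Psi_inj (hn2 : 2 ≤ n) (l : ℕ) (hsep : Separating m l)
    (hc1 : ∑ s, h s = 0) (hc2 : ∑ s, z s * h s = l * ((∑ s, m s) + 1 - l)) :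
    Function.Injective (Psi z m h l) := by
  rw [injective_iff_map_eq_zero]
  intro a ha
  have key : ∀ k : ℕ, ∀ j : Fin l, l ≤ (j : ℕ) + k → a j = 0 := by
    intro k
    induction k with
    | zero => intro j hj; exact absurd hj (by have := j.isLt; omega)
    | succ k ih =>
      intro j hj
      by_cases hcase : l ≤ (j : ℕ) + k
      · exact ih j hcase
      have hjv : (j : ℕ) + k + 1 = l := by omega
      have h0 : Psi z m h l a j = 0 := by rw [ha]; rfl
      rw [show Psi z m h l a j =
          ∑ j' : Fin l, a j' * (Tpoly z m h (X ^ (j' : ℕ))).coeff (n - 2 + (j : ℕ)) from rfl]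
        at h0
      rw [Finset.sum_eq_single j] at h0
      · -- a j * diag = 0
        have hdiag := T_Xpow_coeff z m h hn2 hc1 (j : ℕ)
        rw [hc2] at hdiag
        rw [hdiag] at h0
        have hne : ((j : ℕ) : ℂ) * (((j : ℕ) : ℂ) - 1) - (∑ s, m s) * ((j : ℕ) : ℂ) +
            (l : ℂ) * ((∑ s, m s) + 1 - (l : ℂ)) ≠ 0 := by
          have hfac : ((j : ℕ) : ℂ) * (((j : ℕ) : ℂ) - 1) - (∑ s, m s) * ((j : ℕ) : ℂ) +
              (l : ℂ) * ((∑ s, m s) + 1 - (l : ℂ)) =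
              ((l - (j : ℕ) : ℕ) : ℂ) * ((∑ s, m s) - 2 * l + 1 + ((l - (j : ℕ) : ℕ) : ℂ)) := by
            have hle : (j : ℕ) ≤ l := le_of_lt j.isLt
            push_cast [Nat.cast_sub hle]
            ring
          rw [hfac]
          refine mul_ne_zero ?_ ?_
          · rw [Nat.cast_ne_zero]
            omega
          · exact hsep (l - (j : ℕ)) (by omega) (by omega)
        rcases mul_eq_zero.mp h0 with h' | h'
        · exact h'
        · exact absurd h' hne
      · intro j' _ hne
        rcases Nat.lt_or_ge (j' : ℕ) (j : ℕ) with hlt | hge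
        · rw [T_coeff_zero z m h hn2 hc1 (X ^ (j' : ℕ)) (j' : ℕ) (n - 2 + (j : ℕ))
            (le_of_eq (natDegree_X_pow _)) (by omega), mul_zero]
        · have : (j : ℕ) < (j' : ℕ) := by
            rcases Nat.eq_or_lt_of_le hge with he | hlt
            · exact absurd (Fin.ext he).symm hne
            · exact hlt
          rw [ih j' (by omega), zero_mul]
      · intro habs; exact absurd (Finset.mem_univ _) habs
  funext j
  exact key l j (by omega)

end Aux

theorem statement_3 {n : ℕ} (hn : 1 ≤ n) (m : Fin n → ℂ) (l : ℕ)
    (z : Fin n → ℂ) (hz : Function.Injective z) (hsep : Separating m l)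
    (h : Fin n → ℂ) (hc1 : ∑ s, h s = 0)
    (hc2 : ∑ s, z s * h s = l * ((∑ s, m s) + 1 - l)) :
    ∃! p : Polynomial ℂ, p.Monic ∧ p.natDegree = l ∧
      ∀ k : ℕ, n - 2 ≤ k → (Tpoly z m h p).coeff k = 0 := by
  classical
  open Polynomial in
  by_cases hl0 : l = 0
  · subst hl0
    refine ⟨1, ⟨monic_one, natDegree_one, ?_⟩, ?_⟩
    · intro k hk
      have hT1 : Tpoly z m h 1 =
          ∑ s, C (h s) * ∏ r ∈ Finset.univ.erase s, (X - C (z r)) := by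
        rw [Tpoly]; simp
      rw [hT1]
      by_cases hk1 : n - 1 ≤ k
      · exact C_coeff_high z h hc1 k hk1
      · have hn2 : 2 ≤ n := by omega
        have hke : k = n - 2 := by omega
        subst hke
        rw [C_coeff_n2 z h hn2 hc1, hc2]
        norm_num
    · rintro y ⟨hy1, hy2, _⟩
      exact hy1.natDegree_eq_zero.mp hy2
  · have hl : 1 ≤ l := by omega
    have hn2 : 2 ≤ n := by
      by_contra hcon
      have hne1 : n = 1 := by omega
      subst hne1
      rw [Fin.sum_univ_one] at hc1
      rw [Fin.sum_univ_one, Fin.sum_univ_one] at hc2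
      rw [hc1, mul_zero] at hc2
      have hM : m 0 + 1 - (l : ℂ) = 0 := by
        have hlne : (l : ℂ) ≠ 0 := Nat.cast_ne_zero.mpr (by omega)
        rcases mul_eq_zero.mp hc2.symm with hx | hx
        · exact absurd hx hlne
        · exact hx
      have hs := hsep l hl le_rfl
      rw [Fin.sum_univ_one] at hs
      apply hs
      linear_combination hM
    obtain ⟨a, ha⟩ := (LinearMap.injective_iff_surjective.mp
      (Psi_inj z m h hn2 l hsep hc1 hc2))
      (fun i => -(Tpoly z m h (X ^ l)).coeff (n - 2 + (i : ℕ)))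
    set p : Polynomial ℂ := X ^ l + lowPoly l a with hp
    have hdlt : (lowPoly l a).degree < (l : ℕ) := by
      rw [Polynomial.degree_lt_iff_coeff_zero]
      intro k hk
      rw [lowPoly_coeff, dif_neg (by exact_mod_cast fun hc => absurd hk (by omega))]
    have hdegp : p.degree = l := by
      rw [hp, Polynomial.degree_add_eq_left_of_degree_lt
        (by rw [Polynomial.degree_X_pow]; exact hdlt), Polynomial.degree_X_pow]
    have hndegp : p.natDegree = l := natDegree_eq_of_degree_eq_some hdegp
    have hmonic : p.Monic := by
      have hco : p.coeff l = 1 := by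
        rw [hp, Polynomial.coeff_add, Polynomial.coeff_X_pow, if_pos rfl,
          lowPoly_coeff, dif_neg (by omega), add_zero]
      rwa [Polynomial.Monic, Polynomial.leadingCoeff, hndegp]
    have hcond : ∀ k : ℕ, n - 2 ≤ k → (Tpoly z m h p).coeff k = 0 := by
      intro k hk
      rw [hp, Tpoly_add z m h, Polynomial.coeff_add]
      rcases Nat.lt_or_ge k (n - 2 + l) with hkl | hkl
      · have hiv : k - (n - 2) < l := by omega
        set i : Fin l := ⟨k - (n - 2), hiv⟩ with hi
        have hki : n - 2 + (i : ℕ) = k := by simp only [hi]; omega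
        have h1 : (Tpoly z m h (lowPoly l a)).coeff (n - 2 + (i : ℕ)) =
            -(Tpoly z m h (X ^ l)).coeff (n - 2 + (i : ℕ)) := by
          rw [← Psi_apply z m h l a i]
          exact congrFun ha i
        rw [hki] at h1
        rw [h1]; ring
      · rcases Nat.eq_or_lt_of_le hkl with hke | hkl2
        · subst hke
          have hTlow : (Tpoly z m h (lowPoly l a)).coeff (n - 2 + l) = 0 :=
            T_coeff_zero z m h hn2 hc1 _ (l - 1) _ (lowPoly_natDegree_le l a) (by omega)
          have hTX := T_Xpow_coeff z m h hn2 hc1 l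
          rw [hTlow, hTX, hc2]
          ring
        · rw [T_coeff_zero z m h hn2 hc1 _ l k
              (le_of_eq (Polynomial.natDegree_X_pow l)) (by omega),
            T_coeff_zero z m h hn2 hc1 _ (l - 1) k (lowPoly_natDegree_le l a) (by omega),
            add_zero]
    refine ⟨p, ⟨hmonic, hndegp, hcond⟩, ?_⟩
    rintro y ⟨hy1, hy2, hy3⟩
    set a' : Fin l → ℂ := fun j => (y - p).coeff (j : ℕ) with ha'
    have hlowq : lowPoly l a' = y - p := by
      apply Polynomial.ext
      intro k
      rw [lowPoly_coeff]
      split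
      · next hkl => rfl
      · next hkl =>
        symm
        rcases Nat.eq_or_lt_of_le (by omega : l ≤ k) with hke | hkl2
        · rw [Polynomial.coeff_sub, ← hke]
          have hyc : y.coeff l = 1 := by
            have := hy1.coeff_natDegree; rwa [hy2] at this
          have hpc : p.coeff l = 1 := by
            have := hmonic.coeff_natDegree; rwa [hndegp] at this
          rw [hyc, hpc, sub_self]
        · rw [Polynomial.coeff_sub,
            Polynomial.coeff_eq_zero_of_natDegree_lt (by rw [hy2]; exact hkl2),
            Polynomial.coeff_eq_zero_of_natDegree_lt (by rw [hndegp]; exact hkl2),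
            sub_self]
    have hPsi0 : Psi z m h l a' = 0 := by
      funext i
      show Psi z m h l a' i = 0
      rw [Psi_apply z m h l a' i, hlowq, Tpoly_sub z m h, Polynomial.coeff_sub,
        hy3 _ (by omega), hcond _ (by omega), sub_self]
    have ha0 : a' = 0 := Psi_inj z m h hn2 l hsep hc1 hc2
      (by rw [hPsi0, map_zero])
    have hzero : y - p = 0 := by
      rw [← hlowq, ha0]
      simp [lowPoly]
    exact sub_eq_zero.mp hzero
end

section
/- Assume m_1,…,m_n are nonnegative integers. Let h ∈ ℂ^n, and let f,g ∈ ℂ[x] be monic polynomials of degrees l̃ and l respectively with l̃ > l ≥ 0, such that T_h(f) = 0 and T_h(g) = 0. Then l̃ + l = ∑_{s=1}^n m_s + 1, and the Wronskian satisfies f'g − fg' = (l̃ − l)·∏_{s=1}^n (x−z_s)^{m_s}. -/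
open Polynomial in
/-- Derivative of a finite product of polynomials. -/
lemma derivative_finset_prod {ι : Type*} [DecidableEq ι] (s : Finset ι) (f : ι → Polynomial ℂ) :
    derivative (∏ i ∈ s, f i) = ∑ i ∈ s, (∏ j ∈ s.erase i, f j) * derivative (f i) := by
  induction s using Finset.induction_on with
  | empty => simp
  | @insert a s ha ih =>
    rw [Finset.prod_insert ha, derivative_mul, ih, Finset.sum_insert ha,
      Finset.erase_insert ha, Finset.mul_sum]
    have he : ∀ i ∈ s, (∏ j ∈ (insert a s).erase i, f j) * derivative (f i) =
        f a * ((∏ j ∈ s.erase i, f j) * derivative (f i)) := by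
      intro i hi
      rw [Finset.erase_insert_of_ne (by rintro rfl; exact ha hi),
        Finset.prod_insert (fun hm => ha (Finset.mem_of_mem_erase hm))]
      ring
    rw [Finset.sum_congr rfl he]
    ring

open Polynomial in
/-- Any nonzero polynomial solution of `A Q' = B Q` has degree `∑ m_s`. -/
lemma keydeg_aux {n : ℕ} (hn : 1 ≤ n) (z : Fin n → ℂ) (m : Fin n → ℕ)
    (Q : Polynomial ℂ) (hQ : Q ≠ 0)
    (hEq : (∏ s, (X - C (z s))) * derivative Q =
      (∑ s, C ((m s : ℂ)) * ∏ r ∈ Finset.univ.erase s, (X - C (z r))) * Q) :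
    Q.natDegree = ∑ s, m s := by
  set A : Polynomial ℂ := ∏ s, (X - C (z s)) with hA
  set B : Polynomial ℂ := ∑ s, C ((m s : ℂ)) * ∏ r ∈ Finset.univ.erase s, (X - C (z r)) with hB
  have hAmon : A.Monic := monic_prod_of_monic _ _ fun s _ => monic_X_sub_C _
  have hAdeg : A.natDegree = n := by
    rw [hA, natDegree_prod_of_monic _ _ fun s _ => monic_X_sub_C _]
    simp [natDegree_X_sub_C]
  have hErase : ∀ s : Fin n,
      (∏ r ∈ Finset.univ.erase s, (X - C (z r))).natDegree = n - 1 := by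
    intro s
    rw [natDegree_prod_of_monic _ _ fun r _ => monic_X_sub_C _]
    simp [natDegree_X_sub_C, Finset.card_erase_of_mem]
  have hEraseMon : ∀ s : Fin n,
      (∏ r ∈ Finset.univ.erase s, (X - C (z r))).Monic :=
    fun s => monic_prod_of_monic _ _ fun r _ => monic_X_sub_C _
  have hBdeg : B.natDegree ≤ n - 1 := by
    apply natDegree_sum_le_of_forall_le
    intro s _
    exact (natDegree_C_mul_le _ _).trans (hErase s).le
  have hBco : B.coeff (n - 1) = ∑ s, (m s : ℂ) := by
    rw [hB, finset_sum_coeff]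
    refine Finset.sum_congr rfl fun s _ => ?_
    rw [coeff_C_mul, ← hErase s, (hEraseMon s).coeff_natDegree, mul_one]
  by_cases hk : Q.natDegree = 0
  · have hd0 : derivative Q = 0 := derivative_of_natDegree_zero hk
    rw [hd0, mul_zero] at hEq
    have hB0 : B = 0 := by
      rcases mul_eq_zero.mp hEq.symm with h' | h'
      · exact h'
      · exact absurd h' hQ
    have hsum : (∑ s, (m s : ℂ)) = 0 := by rw [← hBco, hB0, coeff_zero]
    have : ∑ s, m s = 0 := by exact_mod_cast hsum
    omega
  · set k := Q.natDegree with hkdef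
    have hk1 : 1 ≤ k := Nat.one_le_iff_ne_zero.mpr hk
    have hkk : k - 1 + 1 = k := Nat.succ_pred_eq_of_pos hk1
    have e1 : (A * derivative Q).coeff (n + (k - 1)) = Q.coeff k * (k : ℂ) := by
      rw [coeff_mul_add_eq_of_natDegree_le hAdeg.le (natDegree_derivative_le Q),
        ← hAdeg, hAmon.coeff_natDegree, one_mul, coeff_derivative, hkk]
      congr 1
      rw [← Nat.cast_add_one, hkk]
    have e2 : (B * Q).coeff ((n - 1) + k) = (∑ s, (m s : ℂ)) * Q.coeff k := by
      rw [coeff_mul_add_eq_of_natDegree_le hBdeg le_rfl, hBco]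
    have hidx : n + (k - 1) = (n - 1) + k := by omega
    have hc : Q.coeff k * (k : ℂ) = (∑ s, (m s : ℂ)) * Q.coeff k := by
      rw [← e1, ← e2, hEq, hidx]
    have hlc : Q.coeff k ≠ 0 := by
      rw [hkdef]
      exact leadingCoeff_ne_zero.mpr hQ
    have hc' : Q.coeff k * (k : ℂ) = Q.coeff k * ∑ s, (m s : ℂ) := by
      linear_combination hc
    have : (k : ℂ) = ∑ s, (m s : ℂ) := mul_left_cancel₀ hlc hc'
    exact_mod_cast this

open Polynomial

theorem statement_15 {n : ℕ} (hn : 1 ≤ n) (z : Fin n → ℂ) (hz : Function.Injective z)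
    (m : Fin n → ℕ) (h : Fin n → ℂ) (lt l : ℕ) (hll : l < lt)
    (f g : Polynomial ℂ) (hf : f.Monic) (hg : g.Monic)
    (hdf : f.natDegree = lt) (hdg : g.natDegree = l)
    (hTf : Tpoly z (fun s => (m s : ℂ)) h f = 0)
    (hTg : Tpoly z (fun s => (m s : ℂ)) h g = 0) :
    lt + l = (∑ s, m s) + 1 ∧
    Polynomial.derivative f * g - f * Polynomial.derivative g =
      Polynomial.C ((lt : ℂ) - l) * ∏ s, (Polynomial.X - Polynomial.C (z s)) ^ m s := by
  simp only [Tpoly] at hTf hTg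
  set A : Polynomial ℂ := ∏ s, (X - C (z s)) with hA
  set B : Polynomial ℂ := ∑ s, C ((m s : ℂ)) * ∏ r ∈ Finset.univ.erase s, (X - C (z r)) with hB
  set Cc : Polynomial ℂ := ∑ s, C (h s) * ∏ r ∈ Finset.univ.erase s, (X - C (z r)) with hCc
  set W : Polynomial ℂ := derivative f * g - f * derivative g with hWdef
  set P : Polynomial ℂ := ∏ s, (X - C (z s)) ^ m s with hPdef
  set c : ℂ := (lt : ℂ) - l with hcdef
  have hlt1 : 1 ≤ lt := by omega
  have ef : A * derivative (derivative f) = B * derivative f - Cc * f := by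
    linear_combination hTf
  have eg : A * derivative (derivative g) = B * derivative g - Cc * g := by
    linear_combination hTg
  have hW : A * derivative W = B * W := by
    simp only [hWdef, derivative_sub, derivative_mul]
    linear_combination g * ef - f * eg
  -- the identity A P' = B P
  have hP : A * derivative P = B * P := by
    rw [hPdef, derivative_finset_prod, Finset.mul_sum, hB, Finset.sum_mul]
    refine Finset.sum_congr rfl fun s _ => ?_
    rw [derivative_pow, derivative_sub, derivative_X, derivative_C, sub_zero, mul_one]
    have key : (X - C (z s)) * (C ((m s : ℂ)) * (X - C (z s)) ^ (m s - 1)) =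
        C ((m s : ℂ)) * (X - C (z s)) ^ m s := by
      rcases Nat.eq_zero_or_pos (m s) with h0 | h0
      · simp [h0]
      · obtain ⟨t, ht⟩ : ∃ t, m s = t + 1 := ⟨m s - 1, by omega⟩
        rw [ht]
        simp only [Nat.add_sub_cancel]
        ring
    have hAe : A = (X - C (z s)) * ∏ r ∈ Finset.univ.erase s, (X - C (z r)) :=
      (Finset.mul_prod_erase _ _ (Finset.mem_univ s)).symm
    have hPe : (∏ s, (X - C (z s)) ^ m s : Polynomial ℂ) =
        (X - C (z s)) ^ m s * ∏ r ∈ Finset.univ.erase s, (X - C (z r)) ^ m r :=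
      (Finset.mul_prod_erase _ _ (Finset.mem_univ s)).symm
    rw [hAe, hPe]
    linear_combination ((∏ r ∈ Finset.univ.erase s, (X - C (z r))) *
      (∏ r ∈ Finset.univ.erase s, (X - C (z r)) ^ m r)) * key
  -- degree and top coefficient of W
  have hdf' : (derivative f).natDegree ≤ lt - 1 := by
    have := natDegree_derivative_le f; omega
  have hdg' : (derivative g).natDegree ≤ l - 1 := by
    have := natDegree_derivative_le g; omega
  have hcf : f.coeff lt = 1 := by rw [← hdf]; exact hf.coeff_natDegree
  have hcg : g.coeff l = 1 := by rw [← hdg]; exact hg.coeff_natDegree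
  have hW1 : (derivative f * g).coeff (lt + l - 1) = (lt : ℂ) := by
    have e : lt + l - 1 = (lt - 1) + l := by omega
    rw [e, coeff_mul_add_eq_of_natDegree_le hdf' hdg.le, coeff_derivative]
    have e2 : lt - 1 + 1 = lt := by omega
    rw [e2, hcf, hcg, one_mul, mul_one, ← Nat.cast_add_one, e2]
  have hW2 : (f * derivative g).coeff (lt + l - 1) = (l : ℂ) := by
    rcases Nat.eq_zero_or_pos l with h0 | h0
    · have : derivative g = 0 := derivative_of_natDegree_zero (hdg.trans h0)
      rw [this, mul_zero, coeff_zero, h0, Nat.cast_zero]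
    · have e : lt + l - 1 = lt + (l - 1) := by omega
      rw [e, coeff_mul_add_eq_of_natDegree_le hdf.le hdg', coeff_derivative]
      have e2 : l - 1 + 1 = l := by omega
      rw [e2, hcf, hcg, one_mul, one_mul, ← Nat.cast_add_one, e2]
  have hWco : W.coeff (lt + l - 1) = c := by
    rw [hWdef, coeff_sub, hW1, hW2]
  have hcne : c ≠ 0 := by
    rw [hcdef]
    have : (l : ℂ) ≠ (lt : ℂ) := by exact_mod_cast hll.ne
    exact sub_ne_zero.mpr (Ne.symm this)
  have hWne : W ≠ 0 := by
    intro h0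
    rw [h0, coeff_zero] at hWco
    exact hcne hWco.symm
  have hWdle : W.natDegree ≤ lt + l - 1 := by
    refine le_trans (natDegree_sub_le _ _) (max_le ?_ ?_)
    · refine le_trans natDegree_mul_le ?_
      rw [hdg]; omega
    · rcases Nat.eq_zero_or_pos l with h0 | h0
      · have : derivative g = 0 := derivative_of_natDegree_zero (hdg.trans h0)
        simp [this]
      · refine le_trans natDegree_mul_le ?_
        rw [hdf]
        have := hdg'
        omega
  have hWdeg : W.natDegree = lt + l - 1 :=
    le_antisymm hWdle (le_natDegree_of_ne_zero (by rw [hWco]; exact hcne))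
  have hsum : lt + l - 1 = ∑ s, m s := by
    rw [← hWdeg]
    exact keydeg_aux hn z m W hWne hW
  have goal1 : lt + l = (∑ s, m s) + 1 := by omega
  refine ⟨goal1, ?_⟩
  -- P is monic of degree ∑ m
  have hPmon : P.Monic := monic_prod_of_monic _ _ fun s _ => (monic_X_sub_C _).pow _
  have hPdeg : P.natDegree = ∑ s, m s := by
    rw [hPdef, natDegree_prod_of_monic _ _ fun s _ => (monic_X_sub_C _).pow _]
    simp [natDegree_pow, natDegree_X_sub_C]
  set D : Polynomial ℂ := W - C c * P with hDdef
  have hD : A * derivative D = B * D := by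
    simp only [hDdef, derivative_sub, derivative_C_mul]
    linear_combination hW - C c * hP
  have hDco : D.coeff (∑ s, m s) = 0 := by
    have hPc : P.coeff (∑ s, m s) = 1 := by rw [← hPdeg]; exact hPmon.coeff_natDegree
    rw [hDdef, coeff_sub, coeff_C_mul, hPc, mul_one, ← hsum, hWco, sub_self]
  have hDdle : D.natDegree ≤ ∑ s, m s := by
    refine le_trans (natDegree_sub_le _ _) (max_le ?_ ?_)
    · rw [← hsum]; exact hWdle
    · exact (natDegree_C_mul_le _ _).trans hPdeg.le
  have hD0 : D = 0 := by
    by_contra hne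
    have hdeq := keydeg_aux hn z m D hne hD
    have : D.leadingCoeff = 0 := by rw [leadingCoeff, hdeq, hDco]
    exact hne (leadingCoeff_eq_zero.mp this)
  have : W = C c * P := sub_eq_zero.mp hD0
  exact this
end
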